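/- (Bennett trick.) Let Σ = {a₀,…,a_k} be a finite alphabet, ⟨⟨·⟩⟩ an encoding of Σ, and T a term of ForNo computing a total function f : Σ* → Σ* whose input and output register are both x. Let fx be a register not occurring in T and distinct from x, let COPY(x,fx) = NORMAL x {ROF x {PUSH[⟨⟨a₀⟩⟩] fx}…{PUSH[⟨⟨a_k⟩⟩] fx}} and B[T] = T;COPY(x,fx);−T. Then for every w ∈ Σ*: ⟨B[T], (∅[x→⟨⟨w⟩⟩], 0)⟩ ⇓ (∅[x→⟨⟨w⟩⟩, fx→⟨⟨f(w)⟩⟩], 0). -/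

import Mathlib

set_option linter.unusedVariables false

namespace ForNo

/-- Registers. -/
abbrev Reg := ℕ
/-- Stacks of natural numbers; the head is the top. -/
abbrev Stack := List ℕ
/-- Stores map registers to stacks. -/
abbrev Store := Reg → Stack
/-- A state is a store together with an error counter. -/
abbrev FState := Store × ℕ

/-- The store mapping every register to the empty stack. -/
def emptyStore : Store := fun _ => []

/-- Store update. -/
def upd (φ : Store) (x : Reg) (s : Stack) : Store := fun y => if y = x then s else φ y

/-- Counter-guarded push operation. -/
def pushOp (n : ℕ) : Stack × ℕ → Stack × ℕ
  | (s, 0) => (n :: s, 0)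
  | (s, c + 1) => if s.head? = some n then (s, c + 1) else (s, c)

/-- Counter-guarded pop operation. -/
def popOp (n : ℕ) : Stack × ℕ → Stack × ℕ
  | (s, c) =>
      if s.head? = some n then
        match c with
        | 0 => (s.tail, 0)
        | c + 1 => (s, c + 1)
      else (s, c + 1)

mutual
  /-- Terms of the (raw) language. -/
  inductive Term : Type where
    | skip : Term
    | push : ℕ → Reg → Term
    | pop : ℕ → Reg → Term
    | seq : Term → Term → Term
    | ifeq : Reg → ℕ → Term → Term
    | normal : List Reg → Term → Term
    | fort : Reg → Bodies → Term
    | roft : Reg → Bodies → Term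
  /-- Nonempty lists of iteration bodies. -/
  inductive Bodies : Type where
    | single : Term → Bodies
    | cons : Term → Bodies → Bodies
end

/-- `ps.get i` is `P_min(i,m)` where `ps = P₀ … P_m`. -/
def Bodies.get : Bodies → ℕ → Term
  | .single t, _ => t
  | .cons t _, 0 => t
  | .cons _ ps, i + 1 => ps.get i

mutual
  /-- Big-step operational semantics `⟨T, ω⟩ ⇓ ω'`. -/
  inductive Eval : Term → FState → FState → Prop where
    | skip : ∀ ω, Eval .skip ω ω
    | seq : ∀ {t u : Term} {ω ω' ω'' : FState},
        Eval t ω ω' → Eval u ω' ω'' → Eval (.seq t u) ω ω''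
    | push : ∀ (n : ℕ) (x : Reg) (φ : Store) (c : ℕ),
        Eval (.push n x) (φ, c) (upd φ x (pushOp n (φ x, c)).1, (pushOp n (φ x, c)).2)
    | pop : ∀ (n : ℕ) (x : Reg) (φ : Store) (c : ℕ),
        Eval (.pop n x) (φ, c) (upd φ x (popOp n (φ x, c)).1, (popOp n (φ x, c)).2)
    | ifeq_true : ∀ {x n t} {φ : Store} {c : ℕ} {ω' : FState},
        (φ x).head? = some n → Eval t (φ, c) ω' → Eval (.ifeq x n t) (φ, c) ω'
    | ifeq_false : ∀ {x n t} (φ : Store) (c : ℕ),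
        (φ x).head? ≠ some n → Eval (.ifeq x n t) (φ, c) (φ, c)
    | normal : ∀ {xs t ω ω'}, Eval t ω ω' → Eval (.normal xs t) ω ω'
    | fort : ∀ {x ps ω ω'}, EvalList (ω.1 x) ps ω ω' → Eval (.fort x ps) ω ω'
    | roft : ∀ {x ps ω ω'}, EvalList (ω.1 x).reverse ps ω ω' → Eval (.roft x ps) ω ω'
  /-- Iteration judgment `⟦s, ps, ω⟧ ⇓ ω'`. -/
  inductive EvalList : Stack → Bodies → FState → FState → Prop where
    | nil : ∀ (ps : Bodies) (ω : FState), EvalList [] ps ω ω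
    | cons : ∀ {i : ℕ} {t : Stack} {ps : Bodies} {ω ω'' ω' : FState},
        Eval (ps.get i) ω ω'' → EvalList t ps ω'' ω' → EvalList (i :: t) ps ω ω'
end

mutual
  /-- The inversion map `−(·)` on terms. -/
  def Term.inv : Term → Term
    | .skip => .skip
    | .push n x => .pop n x
    | .pop n x => .push n x
    | .seq t u => .seq u.inv t.inv
    | .ifeq x n t => .ifeq x n t.inv
    | .normal xs t => .normal xs t.inv
    | .fort x ps => .roft x ps.inv
    | .roft x ps => .fort x ps.inv
  def Bodies.inv : Bodies → Bodies
    | .single t => .single t.inv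
    | .cons t ps => .cons t.inv ps.inv
end

mutual
  /-- `t.Writes y` holds iff some `PUSH`/`POP` occurring in `t` writes register `y`. -/
  def Term.Writes : Term → Reg → Prop
    | .skip, _ => False
    | .push _ x, y => x = y
    | .pop _ x, y => x = y
    | .seq t u, y => t.Writes y ∨ u.Writes y
    | .ifeq _ _ t, y => t.Writes y
    | .normal _ t, y => t.Writes y
    | .fort _ ps, y => ps.Writes y
    | .roft _ ps, y => ps.Writes y
  def Bodies.Writes : Bodies → Reg → Prop
    | .single t, y => t.Writes y
    | .cons t ps, y => t.Writes y ∨ ps.Writes y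
end

mutual
  /-- `t.Leads y` holds iff `y` leads some `FOR`/`ROF` iteration occurring in `t`. -/
  def Term.Leads : Term → Reg → Prop
    | .skip, _ => False
    | .push _ _, _ => False
    | .pop _ _, _ => False
    | .seq t u, y => t.Leads y ∨ u.Leads y
    | .ifeq _ _ t, y => t.Leads y
    | .normal _ t, y => t.Leads y
    | .fort x ps, y => x = y ∨ ps.Leads y
    | .roft x ps, y => x = y ∨ ps.Leads y
  def Bodies.Leads : Bodies → Reg → Prop
    | .single t, y => t.Leads y
    | .cons t ps, y => t.Leads y ∨ ps.Leads y
end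

mutual
  /-- `t.Mentions y` holds iff register `y` occurs in `t`. -/
  def Term.Mentions : Term → Reg → Prop
    | .skip, _ => False
    | .push _ x, y => x = y
    | .pop _ x, y => x = y
    | .seq t u, y => t.Mentions y ∨ u.Mentions y
    | .ifeq x _ t, y => x = y ∨ t.Mentions y
    | .normal xs t, y => y ∈ xs ∨ t.Mentions y
    | .fort x ps, y => x = y ∨ ps.Mentions y
    | .roft x ps, y => x = y ∨ ps.Mentions y
  def Bodies.Mentions : Bodies → Reg → Prop
    | .single t, y => t.Mentions y
    | .cons t ps, y => t.Mentions y ∨ ps.Mentions y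
end

mutual
  /-- The finite set of registers occurring in a term. -/
  def Term.regs : Term → Finset Reg
    | .skip => ∅
    | .push _ x => {x}
    | .pop _ x => {x}
    | .seq t u => t.regs ∪ u.regs
    | .ifeq x _ t => insert x t.regs
    | .normal xs t => xs.toFinset ∪ t.regs
    | .fort x ps => insert x ps.regs
    | .roft x ps => insert x ps.regs
  def Bodies.regs : Bodies → Finset Reg
    | .single t => t.regs
    | .cons t ps => t.regs ∪ ps.regs
end

mutual
  /-- Safe terms: generated by the grammar `S` (no `NORMAL`). -/
  def Term.Safe : Term → Prop
    | .skip => True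
    | .push _ _ => True
    | .pop _ _ => True
    | .seq t u => t.Safe ∧ u.Safe
    | .ifeq _ _ t => t.Safe
    | .normal _ _ => False
    | .fort _ ps => ps.Safe
    | .roft _ ps => ps.Safe
  def Bodies.Safe : Bodies → Prop
    | .single t => t.Safe
    | .cons t ps => t.Safe ∧ ps.Safe
end

/-- Raw terms: generated by the grammar `T` (iterations only inside `NORMAL` bodies,
which must be safe). -/
def Term.Raw : Term → Prop
  | .skip => True
  | .push _ _ => True
  | .pop _ _ => True
  | .seq t u => t.Raw ∧ u.Raw
  | .ifeq _ _ t => t.Raw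
  | .normal _ t => t.Safe
  | .fort _ _ => False
  | .roft _ _ => False

mutual
  /-- The read-only constraints (i) and (ii) defining membership in ForNo. -/
  def Term.WF : Term → Prop
    | .skip => True
    | .push _ _ => True
    | .pop _ _ => True
    | .seq t u => t.WF ∧ u.WF
    | .ifeq x _ t => t.WF ∧ ¬ t.Writes x
    | .normal xs t => t.WF ∧ (∀ x ∈ xs, ¬ t.Writes x) ∧ (∀ y, t.Leads y → y ∈ xs)
    | .fort x ps => ps.WF ∧ ¬ ps.Writes x
    | .roft x ps => ps.WF ∧ ¬ ps.Writes x
  def Bodies.WF : Bodies → Prop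
    | .single t => t.WF
    | .cons t ps => t.WF ∧ ps.WF
end

/-- A raw term is in ForNo if it satisfies the read-only constraints. -/
def InForNo (t : Term) : Prop := t.Raw ∧ t.WF

/-- `iterSeq t k` is the `k`-fold sequential composition `t;…;t` (`SKIP` for `k = 0`). -/
def iterSeq (t : Term) : ℕ → Term
  | 0 => .skip
  | 1 => t
  | n + 2 => .seq t (iterSeq t (n + 1))

/-- `mkBodiesAux g i k` is the list of bodies `g i, g (i+1), …, g (i+k)`. -/
def mkBodiesAux (g : ℕ → Term) : ℕ → ℕ → Bodies
  | i, 0 => .single (g i)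
  | i, k + 1 => .cons (g i) (mkBodiesAux g (i + 1) k)

/-- `mkBodies g k` is the list of bodies `g 0, g 1, …, g k`. -/
def mkBodies (g : ℕ → Term) (k : ℕ) : Bodies := mkBodiesAux g 0 k

/-- `COPY(x,y)` with bodies `PUSH[0] y, …, PUSH[k] y`. -/
def COPY (x y : Reg) (k : ℕ) : Term :=
  .normal [x] (.roft x (mkBodies (fun i => .push i y) k))

/-- `n` nested `FOR rgt` iterations around `PUSH[1] p`. -/
def powNest (rgt p : Reg) : ℕ → Term
  | 0 => .push 1 p
  | n + 1 => .fort rgt (.single (powNest rgt p n))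

/-- The term `POW^n`. -/
def POW (rgt p : Reg) (n : ℕ) : Term := .normal [rgt] (powNest rgt p n)

/-- The term `REMOVE-BLANKS` for tape alphabet codes `{0,…,n−1}` and
input alphabet codes `{0,…,m−1}`. -/
def REMOVEBLANKS (rgt g1 : Reg) (n m : ℕ) : Term :=
  .seq (.normal [rgt] (.roft rgt (mkBodies (fun i => .push i g1) (n - 1))))
       (.normal [g1]
         (.seq (.fort g1 (mkBodies (fun i => .pop i rgt) (n - 1)))
               (.roft g1 (mkBodies (fun i => if i < m then .push i rgt else .skip) m))))

mutual
  /-- Big-step semantics instrumented with the number of rule applications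
  in the derivation. -/
  inductive EvalN : ℕ → Term → FState → FState → Prop where
    | skip : ∀ ω, EvalN 1 .skip ω ω
    | seq : ∀ {k l : ℕ} {t u : Term} {ω ω' ω'' : FState},
        EvalN k t ω ω' → EvalN l u ω' ω'' → EvalN (k + l + 1) (.seq t u) ω ω''
    | push : ∀ (n : ℕ) (x : Reg) (φ : Store) (c : ℕ),
        EvalN 1 (.push n x) (φ, c) (upd φ x (pushOp n (φ x, c)).1, (pushOp n (φ x, c)).2)
    | pop : ∀ (n : ℕ) (x : Reg) (φ : Store) (c : ℕ),
        EvalN 1 (.pop n x) (φ, c) (upd φ x (popOp n (φ x, c)).1, (popOp n (φ x, c)).2)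
    | ifeq_true : ∀ {k x n t} {φ : Store} {c : ℕ} {ω' : FState},
        (φ x).head? = some n → EvalN k t (φ, c) ω' → EvalN (k + 1) (.ifeq x n t) (φ, c) ω'
    | ifeq_false : ∀ {x n t} (φ : Store) (c : ℕ),
        (φ x).head? ≠ some n → EvalN 1 (.ifeq x n t) (φ, c) (φ, c)
    | normal : ∀ {k xs t ω ω'}, EvalN k t ω ω' → EvalN (k + 1) (.normal xs t) ω ω'
    | fort : ∀ {k x ps ω ω'}, EvalListN k (ω.1 x) ps ω ω' → EvalN (k + 1) (.fort x ps) ω ω'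
    | roft : ∀ {k x ps ω ω'}, EvalListN k (ω.1 x).reverse ps ω ω' → EvalN (k + 1) (.roft x ps) ω ω'
  inductive EvalListN : ℕ → Stack → Bodies → FState → FState → Prop where
    | nil : ∀ (ps : Bodies) (ω : FState), EvalListN 1 [] ps ω ω
    | cons : ∀ {k l : ℕ} {i : ℕ} {t : Stack} {ps : Bodies} {ω ω'' ω' : FState},
        EvalN k (ps.get i) ω ω'' → EvalListN l t ps ω'' ω' →
        EvalListN (k + l + 1) (i :: t) ps ω ω'
end

/-! ### Turing machines -/

/-- Deterministic one-tape Turing machines with a semi-infinite tape, input/output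
alphabet `S` embedded in the tape alphabet `Γ`, and direction `Bool`
(`false` = left, `true` = right). -/
structure TM (S : Type) where
  Q : Type
  finQ : Fintype Q
  q0 : Q
  qhalt : Q
  Γ : Type
  finΓ : Fintype Γ
  decΓ : DecidableEq Γ
  blank : Γ
  embed : S → Γ
  embed_inj : Function.Injective embed
  blank_notin : ∀ a, embed a ≠ blank
  δ : Q → Γ → Q × Γ × Bool

namespace TM

variable {S : Type}

/-- Configurations `(u, q, v)`: left tape part (nearest cell first), current state,
right tape part starting with the scanned cell (no trailing blanks). -/
abbrev Config (M : TM S) : Type := List M.Γ × M.Q × List M.Γ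

/-- Remove the trailing blanks of a list. -/
def trim (M : TM S) (l : List M.Γ) : List M.Γ :=
  letI := M.decΓ
  (l.reverse.dropWhile (fun a => decide (a = M.blank))).reverse

/-- The single-step transition function. -/
def stepFn (M : TM S) (c : M.Config) : M.Config :=
  let u := c.1
  let q := c.2.1
  let v := c.2.2
  let a := v.headD M.blank
  let r := M.δ q a
  if r.2.2 then (r.2.1 :: u, r.1, v.tail)
  else (u.tail, r.1, M.trim (u.headD M.blank :: r.2.1 :: v.tail))

/-- Single-step transition relation `c ⇝ c'`. -/
def Step (M : TM S) (c c' : M.Config) : Prop := c.2.1 ≠ M.qhalt ∧ c' = M.stepFn c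

/-- `n`-step transition relation `c ⇝ⁿ c'`. -/
def Steps (M : TM S) : ℕ → M.Config → M.Config → Prop
  | 0 => fun c c' => c = c'
  | n + 1 => fun c c'' => ∃ c', M.Step c c' ∧ M.Steps n c' c''

/-- The initial configuration on input `w`. -/
def init (M : TM S) (w : List S) : M.Config := ([], M.q0, w.map M.embed)

/-- `M` is a polynomial-time Turing machine. -/
def PTime (M : TM S) : Prop :=
  ∃ a b : ℕ, 0 < a ∧ 0 < b ∧ ∀ w : List S,
    ∃ k ≤ a * w.length ^ b, ∃ c : M.Config, M.Steps k (M.init w) c ∧ c.2.1 = M.qhalt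

end TM

/-- `f` is computable in polynomial time. -/
def FPTime {S : Type} (f : List S → List S) : Prop :=
  ∃ M : TM S, M.PTime ∧
    ∀ w : List S, ∃ k : ℕ, M.Steps k (M.init w) ([], M.qhalt, (f w).map M.embed)

/-- `f` is honest: the input length is polynomially bounded in the output length. -/
def Honest {S : Type} (f : List S → List S) : Prop :=
  ∃ q : Polynomial ℕ, ∀ x : List S, x.length ≤ q.eval (f x).length

/-! ### Encodings and computed functions -/

/-- An encoding of a finite alphabet `S`: a bijection onto `{0, …, |S| − 1}`. -/
structure Encoding (S : Type) [Fintype S] where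
  enc : S → ℕ
  inj : Function.Injective enc
  lt : ∀ a, enc a < Fintype.card S

/-- Encoding of strings as stacks. -/
def Encoding.encStr {S : Type} [Fintype S] (e : Encoding S) (w : List S) : Stack :=
  w.map e.enc

/-- `T` (with input register `rin` and output register `rout`) computes `f`. -/
def Computes {S : Type} [Fintype S] (e : Encoding S) (T : Term) (rin rout : Reg)
    (f : List S → List S) : Prop :=
  ∀ x : List S, ∃ φ : Store,
    Eval T (upd emptyStore rin (e.encStr x), 0) (φ, 0) ∧ φ rout = e.encStr (f x)

/-- `T` computes `f` with zero-garbage. -/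
def ComputesZG {S : Type} [Fintype S] (e : Encoding S) (T : Term) (rin rout : Reg)
    (f : List S → List S) : Prop :=
  ∀ x : List S, ∃ φ : Store,
    Eval T (upd emptyStore rin (e.encStr x), 0) (φ, 0) ∧ φ rout = e.encStr (f x) ∧
    ∀ y : Reg, y ≠ rout → φ y = []

/-! ### Simulation of Turing machines -/

/-- The register holding the left part of the tape. -/
def lftR : Reg := 0
/-- The register holding the current state. -/
def qR : Reg := 1
/-- The register holding the right part of the tape. -/
def rgtR : Reg := 2

/-- `σ` simulates configuration `c` (written `σ ≈ c`). -/
def Sim {S : Type} (M : TM S) (encΓ : M.Γ → ℕ) (encQ : M.Q → ℕ)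
    (σ : FState) (c : M.Config) : Prop :=
  σ.2 = 0 ∧
  σ.1 lftR = c.1.map encΓ ∧
  (σ.1 qR).head? = some (encQ c.2.1) ∧
  ∃ bs : Stack, (∀ b ∈ bs, b = encΓ M.blank) ∧ σ.1 rgtR = c.2.2.map encΓ ++ bs

/-- `σ` cleanly simulates configuration `c` (written `σ ≅ c`). -/
def SimClean {S : Type} (M : TM S) (encΓ : M.Γ → ℕ) (encQ : M.Q → ℕ)
    (σ : FState) (c : M.Config) : Prop :=
  σ.2 = 0 ∧
  σ.1 lftR = c.1.map encΓ ∧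
  (σ.1 qR).head? = some (encQ c.2.1) ∧
  σ.1 rgtR = c.2.2.map encΓ

/-- The hypotheses of the simulation setup: `encΓ` is a bijection of `Γ` onto
`{0,…,n−1}` giving non-input characters larger codes than input characters,
and `encQ` is an injective encoding of states. -/
def SimSetup {S : Type} (M : TM S) (encΓ : M.Γ → ℕ) (encQ : M.Q → ℕ) : Prop :=
  Function.Injective encΓ ∧
  (∀ a : M.Γ, encΓ a < @Fintype.card M.Γ M.finΓ) ∧
  (∀ a : M.Γ, (∀ s : S, M.embed s ≠ a) → ∀ s : S, encΓ (M.embed s) < encΓ a) ∧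
  Function.Injective encQ


/-! ### Auxiliary lemmas for the Bennett trick -/

theorem upd_same (φ : Store) (x : Reg) (s : Stack) : upd φ x s x = s := by simp [upd]

theorem upd_ne (φ : Store) {x y : Reg} (h : y ≠ x) (s : Stack) : upd φ x s y = φ y := by
  simp [upd, h]

theorem upd_upd_self (φ : Store) (x : Reg) (s t : Stack) :
    upd (upd φ x s) x t = upd φ x t := by
  funext y; by_cases h : y = x <;> simp [upd, h]

theorem upd_comm {x y : Reg} (h : x ≠ y) (φ : Store) (s t : Stack) :
    upd (upd φ x s) y t = upd (upd φ y t) x s := by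
  funext z
  by_cases h1 : z = x <;> by_cases h2 : z = y <;> simp_all [upd]

theorem upd_self (φ : Store) (x : Reg) : upd φ x (φ x) = φ := by
  funext y; by_cases h : y = x <;> simp [upd, h]

theorem popOp_pushOp (n : ℕ) : ∀ p : Stack × ℕ, popOp n (pushOp n p) = p
  | (s, 0) => by simp [pushOp, popOp]
  | (s, c + 1) => by by_cases h : s.head? = some n <;> simp [pushOp, popOp, h]

theorem pushOp_popOp (n : ℕ) : ∀ p : Stack × ℕ, pushOp n (popOp n p) = p
  | (s, 0) => by
      cases s with
      | nil => simp [popOp, pushOp]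
      | cons a t =>
          by_cases h : a = n
          · subst h; simp [popOp, pushOp]
          · simp [popOp, pushOp, h]
  | (s, c + 1) => by by_cases h : s.head? = some n <;> simp [popOp, pushOp, h]

mutual
theorem Term.mentions_of_writes : ∀ (t : Term) (y : Reg), t.Writes y → t.Mentions y
  | .skip, _, h => h.elim
  | .push _ _, _, h => h
  | .pop _ _, _, h => h
  | .seq t u, y, h => h.imp (t.mentions_of_writes y) (u.mentions_of_writes y)
  | .ifeq _ _ t, y, h => Or.inr (t.mentions_of_writes y h)
  | .normal _ t, y, h => Or.inr (t.mentions_of_writes y h)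
  | .fort _ ps, y, h => Or.inr (ps.mentions_of_writes y h)
  | .roft _ ps, y, h => Or.inr (ps.mentions_of_writes y h)
theorem Bodies.mentions_of_writes : ∀ (ps : Bodies) (y : Reg), ps.Writes y → ps.Mentions y
  | .single t, y, h => t.mentions_of_writes y h
  | .cons t ps, y, h => h.imp (t.mentions_of_writes y) (ps.mentions_of_writes y)
end

mutual
theorem Term.mentions_inv : ∀ (t : Term) (y : Reg), t.inv.Mentions y → t.Mentions y
  | .skip, _, h => h
  | .push _ _, _, h => h
  | .pop _ _, _, h => h
  | .seq t u, y, h => (h.imp (u.mentions_inv y) (t.mentions_inv y)).symm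
  | .ifeq _ _ t, y, h => h.imp id (t.mentions_inv y)
  | .normal _ t, y, h => h.imp id (t.mentions_inv y)
  | .fort _ ps, y, h => h.imp id (ps.mentions_inv y)
  | .roft _ ps, y, h => h.imp id (ps.mentions_inv y)
theorem Bodies.mentions_inv : ∀ (ps : Bodies) (y : Reg), ps.inv.Mentions y → ps.Mentions y
  | .single t, y, h => t.mentions_inv y h
  | .cons t ps, y, h => h.imp (t.mentions_inv y) (ps.mentions_inv y)
end

theorem Bodies.writes_get : ∀ (ps : Bodies) (i : ℕ) (y : Reg),
    (ps.get i).Writes y → ps.Writes y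
  | .single _, _, _, h => h
  | .cons _ _, 0, _, h => Or.inl h
  | .cons _ ps, i + 1, y, h => Or.inr (ps.writes_get i y h)

theorem Bodies.mentions_get : ∀ (ps : Bodies) (i : ℕ) (y : Reg),
    (ps.get i).Mentions y → ps.Mentions y
  | .single _, _, _, h => h
  | .cons _ _, 0, _, h => Or.inl h
  | .cons _ ps, i + 1, y, h => Or.inr (ps.mentions_get i y h)

theorem Bodies.get_inv : ∀ (ps : Bodies) (i : ℕ), ps.inv.get i = (ps.get i).inv
  | .single _, _ => rfl
  | .cons _ _, 0 => rfl
  | .cons _ ps, i + 1 => ps.get_inv i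

theorem Bodies.wf_get : ∀ (ps : Bodies), ps.WF → ∀ i, (ps.get i).WF
  | .single _, h, _ => h
  | .cons _ _, h, 0 => h.1
  | .cons _ ps, h, i + 1 => ps.wf_get h.2 i

theorem EvalList.nil_inv {ps : Bodies} {ω ω' : FState} (h : EvalList [] ps ω ω') : ω = ω' := by
  cases h; rfl

theorem EvalList.cons_inv {i : ℕ} {t : Stack} {ps : Bodies} {ω ω' : FState}
    (h : EvalList (i :: t) ps ω ω') :
    ∃ ω'', Eval (ps.get i) ω ω'' ∧ EvalList t ps ω'' ω' := by
  cases h with | cons h1 h2 => exact ⟨_, h1, h2⟩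

theorem EvalList.append {s t : Stack} {ps : Bodies} {ω ω' ω'' : FState}
    (h1 : EvalList s ps ω ω') (h2 : EvalList t ps ω' ω'') :
    EvalList (s ++ t) ps ω ω'' := by
  induction s generalizing ω with
  | nil => obtain rfl := h1.nil_inv; exact h2
  | cons i s ih =>
      obtain ⟨ωm, ha, hb⟩ := h1.cons_inv
      exact .cons ha (ih hb)

theorem Eval.noWrites {t : Term} {ω ω' : FState} (h : Eval t ω ω') :
    ∀ y, ¬ t.Writes y → ω'.1 y = ω.1 y := by
  induction h using Eval.rec
    (motive_2 := fun s ps ω ω' _ => ∀ y, ¬ ps.Writes y → ω'.1 y = ω.1 y) with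
  | skip => intro y _; rfl
  | seq h1 h2 ih1 ih2 =>
      intro y hy
      simp only [Term.Writes] at hy
      rw [ih2 y (fun hh => hy (Or.inr hh)), ih1 y (fun hh => hy (Or.inl hh))]
  | push n z φ c =>
      intro y hy
      simp only [Term.Writes] at hy
      exact upd_ne φ (fun hh => hy hh.symm) _
  | pop n z φ c =>
      intro y hy
      simp only [Term.Writes] at hy
      exact upd_ne φ (fun hh => hy hh.symm) _
  | ifeq_true _ _ ih => exact ih
  | ifeq_false => intro y _; rfl
  | normal _ ih => exact ih
  | fort _ ih => exact ih
  | roft _ ih => exact ih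
  | nil => rfl
  | cons h1 h2 ih1 ih2 =>
      rename_i y hy
      rw [ih2 y hy, ih1 y (fun hh => hy (Bodies.writes_get _ _ _ hh))]

theorem EvalList.noWrites {s : Stack} {ps : Bodies} {ω ω' : FState}
    (h : EvalList s ps ω ω') : ∀ y, ¬ ps.Writes y → ω'.1 y = ω.1 y := by
  induction s generalizing ω with
  | nil => obtain rfl := h.nil_inv; intro y _; rfl
  | cons i s ih =>
      obtain ⟨ωm, ha, hb⟩ := h.cons_inv
      intro y hy
      rw [ih hb y hy, ha.noWrites y (fun hh => hy (Bodies.writes_get _ _ _ hh))]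

theorem Eval.frame {t : Term} {ω ω' : FState} (h : Eval t ω ω') :
    ∀ y v, ¬ t.Mentions y → Eval t (upd ω.1 y v, ω.2) (upd ω'.1 y v, ω'.2) := by
  induction h using Eval.rec
    (motive_2 := fun s ps ω ω' _ => ∀ y v, ¬ ps.Mentions y →
      EvalList s ps (upd ω.1 y v, ω.2) (upd ω'.1 y v, ω'.2)) with
  | skip => intro y v _; exact Eval.skip _
  | seq h1 h2 ih1 ih2 =>
      intro y v hy
      simp only [Term.Mentions] at hy
      exact Eval.seq (ih1 y v (fun hh => hy (Or.inl hh))) (ih2 y v (fun hh => hy (Or.inr hh)))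
  | push n z φ c =>
      intro y v hy
      simp only [Term.Mentions] at hy
      have hzy : z ≠ y := fun hh => hy hh
      have := Eval.push n z (upd φ y v) c
      rwa [upd_ne _ hzy, upd_comm (fun hh => hzy hh.symm)] at this
  | pop n z φ c =>
      intro y v hy
      simp only [Term.Mentions] at hy
      have hzy : z ≠ y := fun hh => hy hh
      have := Eval.pop n z (upd φ y v) c
      rwa [upd_ne _ hzy, upd_comm (fun hh => hzy hh.symm)] at this
  | @ifeq_true z n t φ c ω' hhead _ ih =>
      intro y v hy
      simp only [Term.Mentions] at hy
      have hzy : z ≠ y := fun hh => hy (Or.inl hh)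
      refine Eval.ifeq_true ?_ (ih y v (fun hh => hy (Or.inr hh)))
      rwa [upd_ne _ hzy]
  | @ifeq_false z n t φ c hhead =>
      intro y v hy
      simp only [Term.Mentions] at hy
      have hzy : z ≠ y := fun hh => hy (Or.inl hh)
      exact Eval.ifeq_false _ _ (by rwa [upd_ne _ hzy])
  | normal _ ih =>
      intro y v hy
      simp only [Term.Mentions] at hy
      exact Eval.normal (ih y v (fun hh => hy (Or.inr hh)))
  | @fort z ps ω ω' hl ih =>
      intro y v hy
      simp only [Term.Mentions] at hy
      have hzy : z ≠ y := fun hh => hy (Or.inl hh)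
      refine Eval.fort ?_
      show EvalList ((upd ω.1 y v) z) ps _ _
      rw [upd_ne _ hzy]
      exact ih y v (fun hh => hy (Or.inr hh))
  | @roft z ps ω ω' hl ih =>
      intro y v hy
      simp only [Term.Mentions] at hy
      have hzy : z ≠ y := fun hh => hy (Or.inl hh)
      refine Eval.roft ?_
      show EvalList ((upd ω.1 y v) z).reverse ps _ _
      rw [upd_ne _ hzy]
      exact ih y v (fun hh => hy (Or.inr hh))
  | nil => exact EvalList.nil _ _
  | cons h1 h2 ih1 ih2 =>
      rename_i y v hy
      exact EvalList.cons (ih1 y v (fun hh => hy (Bodies.mentions_get _ _ _ hh)))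
        (ih2 y v hy)

theorem Eval.rev {t : Term} {ω ω' : FState} (h : Eval t ω ω') :
    t.WF → Eval t.inv ω' ω := by
  induction h using Eval.rec
    (motive_2 := fun s ps ω ω' _ => ps.WF → EvalList s.reverse ps.inv ω' ω) with
  | skip => intro _; exact Eval.skip _
  | seq h1 h2 ih1 ih2 => intro hwf; exact Eval.seq (ih2 hwf.2) (ih1 hwf.1)
  | push n z φ c =>
      intro _
      have := Eval.pop n z (upd φ z (pushOp n (φ z, c)).1) (pushOp n (φ z, c)).2
      rwa [upd_same, ← Prod.mk.eta (p := pushOp n (φ z, c)), popOp_pushOp,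
        upd_upd_self, upd_self] at this
  | pop n z φ c =>
      intro _
      have := Eval.push n z (upd φ z (popOp n (φ z, c)).1) (popOp n (φ z, c)).2
      rwa [upd_same, ← Prod.mk.eta (p := popOp n (φ z, c)), pushOp_popOp,
        upd_upd_self, upd_self] at this
  | @ifeq_true z n t φ c ω' hhead hev ih =>
      intro hwf
      obtain ⟨φ', c'⟩ := ω'
      have hx : φ' z = φ z := hev.noWrites z hwf.2
      exact Eval.ifeq_true (by rwa [hx]) (ih hwf.1)
  | @ifeq_false z n t φ c hhead => intro hwf; exact Eval.ifeq_false _ _ hhead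
  | normal _ ih => intro hwf; exact Eval.normal (ih hwf.1)
  | @fort z ps ω ω' hl ih =>
      intro hwf
      refine Eval.roft ?_
      have hx : ω'.1 z = ω.1 z := hl.noWrites z hwf.2
      show EvalList (ω'.1 z).reverse ps.inv ω' ω
      rw [hx]
      exact ih hwf.1
  | @roft z ps ω ω' hl ih =>
      intro hwf
      refine Eval.fort ?_
      have hx : ω'.1 z = ω.1 z := hl.noWrites z hwf.2
      show EvalList (ω'.1 z) ps.inv ω' ω
      rw [hx, ← List.reverse_reverse (ω.1 z)]
      exact ih hwf.1
  | nil => exact EvalList.nil _ _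
  | cons h1 h2 ih1 ih2 =>
      rename_i hwf
      rw [List.reverse_cons]
      refine EvalList.append (ih2 hwf) ?_
      refine EvalList.cons ?_ (EvalList.nil _ _)
      rw [Bodies.get_inv]
      exact ih1 (Bodies.wf_get _ hwf _)

theorem mkBodiesAux_get (g : ℕ → Term) :
    ∀ (K a i : ℕ), i ≤ K → (mkBodiesAux g a K).get i = g (a + i)
  | 0, a, 0, _ => rfl
  | K + 1, a, 0, _ => rfl
  | K + 1, a, i + 1, h => by
      show (mkBodiesAux g (a + 1) K).get i = g (a + (i + 1))
      rw [show a + (i + 1) = (a + 1) + i by omega]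
      exact mkBodiesAux_get g K (a + 1) i (Nat.lt_succ_iff.mp h)

theorem mkBodies_get (g : ℕ → Term) (K i : ℕ) (h : i ≤ K) :
    (mkBodies g K).get i = g i := by
  simpa [mkBodies] using mkBodiesAux_get g K 0 i h

theorem copy_list (fx k : ℕ) : ∀ (l : List ℕ), (∀ i ∈ l, i ≤ k) → ∀ φ : Store,
    EvalList l (mkBodies (fun i => .push i fx) k) (φ, 0) (upd φ fx (l.reverse ++ φ fx), 0)
  | [], _, φ => by
      simpa [upd_self] using EvalList.nil (mkBodies (fun i => .push i fx) k) (φ, 0)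
  | i :: t, hall, φ => by
      have h1 : Eval ((mkBodies (fun i => .push i fx) k).get i) (φ, 0)
          (upd φ fx (i :: φ fx), 0) := by
        rw [mkBodies_get _ _ _ (hall i (by simp))]
        simpa [pushOp] using Eval.push i fx φ 0
      refine EvalList.cons h1 ?_
      have h2 := copy_list fx k t (fun j hj => hall j (by simp [hj])) (upd φ fx (i :: φ fx))
      simpa [upd_same, upd_upd_self, List.append_assoc] using h2

theorem copy_eval {x fx : Reg} (k : ℕ) (φ : Store) (hfx : φ fx = [])
    (hall : ∀ i ∈ φ x, i ≤ k) :
    Eval (COPY x fx k) (φ, 0) (upd φ fx (φ x), 0) := by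
  refine Eval.normal (Eval.roft ?_)
  have := copy_list fx k (φ x).reverse (by simpa using hall) φ
  simpa [hfx] using this

end ForNo
open ForNo in
/-- Bennett trick: for `Σ = {a₀,…,a_k}`, if `T ∈ ForNo` computes
`f` with input/output register `x` and `fx ∉ T`, then
`B[T] = T;COPY(x,fx);−T` maps `∅[x→⟨⟨w⟩⟩]` to `∅[x→⟨⟨w⟩⟩, fx→⟨⟨f(w)⟩⟩]`. -/
theorem bennett_trick {S : Type} [Fintype S] (k : ℕ) (hcard : Fintype.card S = k + 1)
    (e : Encoding S) (T : Term) (hT : InForNo T)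
    (x fx : Reg) (hne : fx ≠ x) (hnotin : ¬ T.Mentions fx)
    (f : List S → List S) (hcomp : Computes e T x x f) :
    ∀ w : List S,
      Eval (.seq T (.seq (COPY x fx k) T.inv))
        (upd emptyStore x (e.encStr w), 0)
        (upd (upd emptyStore x (e.encStr w)) fx (e.encStr (f w)), 0) := by
  intro w
  obtain ⟨φ, hev, hout⟩ := hcomp w
  have hWT : ¬ T.Writes fx := fun h => hnotin (T.mentions_of_writes fx h)
  have hfx : φ fx = [] := by
    have h := hev.noWrites fx hWT
    simpa [upd_ne _ hne, emptyStore] using h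
  have hall : ∀ i ∈ φ x, i ≤ k := by
    rw [hout]
    intro i hi
    simp only [Encoding.encStr, List.mem_map] at hi
    obtain ⟨a, _, rfl⟩ := hi
    have := e.lt a
    omega
  have hcopy : Eval (COPY x fx k) (φ, 0) (upd φ fx (φ x), 0) := copy_eval k φ hfx hall
  have hrev : Eval T.inv (φ, 0) (upd emptyStore x (e.encStr w), 0) := hev.rev hT.2
  have hninv : ¬ T.inv.Mentions fx := fun h => hnotin (T.mentions_inv fx h)
  have hframe := hrev.frame fx (e.encStr (f w)) hninv
  rw [hout] at hcopy
  exact Eval.seq hev (Eval.seq hcopy hframe)
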